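/- Let ν be a σ-finite measure on a measurable space W, and let π_1, π_2 : W → [0,∞) be probability densities with respect to ν (∫ π_i dν = 1) with positive overlap Λ := ∫ min(π_1, π_2) dν > 0; let μ_1, μ_2 be the corresponding probability measures. Then for every measurable f : W → ℝ that is square-integrable with respect to both μ_1 and μ_2, ∬ (f(x) − f(y))² μ_1(dx) μ_2(dy) ≤ ((2 − Λ)/Λ) (Var_{μ_1}(f) + Var_{μ_2}(f)). -/

import Mathlib

open MeasureTheory ENNReal

lemma center_int_aux {W : Type*} [MeasurableSpace W] (μ : Measure W)
    [IsFiniteMeasure μ] (f : W → ℝ) (c : ℝ) (hf : Integrable f μ)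
    (hf2 : Integrable (fun x => f x ^ 2) μ) :
    Integrable (fun x => (f x - c) ^ 2) μ ∧
    (∫ x, (f x - c) ∂μ) = (∫ x, f x ∂μ) - (μ Set.univ).toReal * c ∧
    (∫ x, (f x - c) ^ 2 ∂μ)
      = (∫ x, f x ^ 2 ∂μ) - 2 * c * (∫ x, f x ∂μ) + c ^ 2 * (μ Set.univ).toReal := by
  have h1 : Integrable (fun x => 2 * c * f x) μ := hf.const_mul _
  have h2 : Integrable (fun x => f x ^ 2 - 2 * c * f x) μ := hf2.sub h1
  have h3 : Integrable (fun x => f x ^ 2 - 2 * c * f x + c ^ 2) μ := h2.add (integrable_const _)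
  have he : (fun x => (f x - c) ^ 2) = fun x => f x ^ 2 - 2 * c * f x + c ^ 2 := by
    funext x; ring
  refine ⟨by rw [he]; exact h3, ?_, ?_⟩
  · rw [integral_sub hf (integrable_const _), integral_const, smul_eq_mul]; rfl
  · rw [he, integral_add h2 (integrable_const _), integral_sub hf2 h1, integral_const_mul,
      integral_const, smul_eq_mul, measureReal_def]
    ring

/-- Jensen / Cauchy-Schwarz for a finite measure: `(∫ g)² ≤ μ(univ) ∫ g²`. -/
lemma sq_integral_le_aux {W : Type*} [MeasurableSpace W] (μ : Measure W)
    [IsFiniteMeasure μ] (g : W → ℝ) (hg : Integrable g μ)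
    (hg2 : Integrable (fun x => g x ^ 2) μ) :
    (∫ x, g x ∂μ) ^ 2 ≤ (μ Set.univ).toReal * ∫ x, g x ^ 2 ∂μ := by
  rcases eq_or_ne (μ Set.univ) 0 with h0 | h0
  · rw [Measure.measure_univ_eq_zero.mp h0]
    simp
  · have hKpos : 0 < (μ Set.univ).toReal := ENNReal.toReal_pos h0 (measure_ne_top μ _)
    obtain ⟨hint, -, hsq⟩ :=
      center_int_aux μ g ((∫ x, g x ∂μ) / (μ Set.univ).toReal) hg hg2
    have h0le : 0 ≤ ∫ x, (g x - (∫ x, g x ∂μ) / (μ Set.univ).toReal) ^ 2 ∂μ :=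
      integral_nonneg fun x => sq_nonneg _
    rw [hsq] at h0le
    have htK : (∫ x, g x ∂μ) / (μ Set.univ).toReal * (μ Set.univ).toReal = ∫ x, g x ∂μ := by
      field_simp
    set K := (μ Set.univ).toReal
    set J := ∫ x, g x ∂μ
    set S := ∫ x, g x ^ 2 ∂μ
    have hmul : 0 ≤ K * (S - 2 * (J / K) * J + (J / K) ^ 2 * K) :=
      mul_nonneg hKpos.le h0le
    have hexp : K * (S - 2 * (J / K) * J + (J / K) ^ 2 * K) = K * S - J ^ 2 := by
      field_simp
      ring
    linarith [hexp ▸ hmul]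

set_option maxHeartbeats 1000000 in
/-- for two probability densities with positive overlap `Λ`,
`∬ (f(x) − f(y))² μ_1(dx) μ_2(dy) ≤ ((2 − Λ)/Λ)(Var_{μ_1}(f) + Var_{μ_2}(f))`. -/
theorem overlap_variance_bound
    {W : Type*} [MeasurableSpace W]
    (ν : Measure W) [SigmaFinite ν]
    (π1 π2 : W → ℝ≥0∞) (h1m : Measurable π1) (h2m : Measurable π2)
    (h1fin : ∀ x, π1 x ≠ ∞) (h2fin : ∀ x, π2 x ≠ ∞)
    (h1 : ∫⁻ x, π1 x ∂ν = 1) (h2 : ∫⁻ x, π2 x ∂ν = 1)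
    (μ1 μ2 : Measure W) (hμ1 : μ1 = ν.withDensity π1) (hμ2 : μ2 = ν.withDensity π2)
    (Λ : ℝ) (hΛ : Λ = (∫⁻ x, min (π1 x) (π2 x) ∂ν).toReal) (hΛpos : 0 < Λ)
    (f : W → ℝ) (hf1 : MemLp f 2 μ1) (hf2 : MemLp f 2 μ2) :
    ∫ x, ∫ y, (f x - f y) ^ 2 ∂μ2 ∂μ1 ≤
      (2 - Λ) / Λ *
        ((∫ x, f x ^ 2 ∂μ1 - (∫ x, f x ∂μ1) ^ 2) +
          (∫ y, f y ^ 2 ∂μ2 - (∫ y, f y ∂μ2) ^ 2)) := by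
  have hmm : Measurable (fun x => min (π1 x) (π2 x)) := h1m.min h2m
  have hm1 : ∀ x, min (π1 x) (π2 x) ≤ π1 x := fun x => min_le_left _ _
  have hm2 : ∀ x, min (π1 x) (π2 x) ≤ π2 x := fun x => min_le_right _ _
  have hL1 : ∫⁻ x, min (π1 x) (π2 x) ∂ν ≤ 1 := h1 ▸ lintegral_mono hm1
  have hLt : ∫⁻ x, min (π1 x) (π2 x) ∂ν ≠ ⊤ := ne_top_of_le_ne_top one_ne_top hL1
  have hΛ1 : Λ ≤ 1 := by
    rw [hΛ]
    simpa using ENNReal.toReal_mono one_ne_top hL1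
  haveI hP1 : IsProbabilityMeasure μ1 :=
    ⟨by rw [hμ1, withDensity_apply _ MeasurableSet.univ, setLIntegral_univ, h1]⟩
  haveI hP2 : IsProbabilityMeasure μ2 :=
    ⟨by rw [hμ2, withDensity_apply _ MeasurableSet.univ, setLIntegral_univ, h2]⟩
  set μρ : Measure W := ν.withDensity (fun x => min (π1 x) (π2 x)) with hμρ
  set μd1 : Measure W := ν.withDensity (fun x => π1 x - min (π1 x) (π2 x)) with hμd1
  set μd2 : Measure W := ν.withDensity (fun x => π2 x - min (π1 x) (π2 x)) with hμd2
  have hdec1 : μ1 = μρ + μd1 := by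
    rw [hμ1, hμρ, hμd1, ← withDensity_add_left hmm]
    congr 1
    funext x
    exact (add_tsub_cancel_of_le (hm1 x)).symm
  have hdec2 : μ2 = μρ + μd2 := by
    rw [hμ2, hμρ, hμd2, ← withDensity_add_left hmm]
    congr 1
    funext x
    exact (add_tsub_cancel_of_le (hm2 x)).symm
  -- masses
  have hρuniv : μρ Set.univ = ∫⁻ x, min (π1 x) (π2 x) ∂ν := by
    rw [hμρ, withDensity_apply _ MeasurableSet.univ, setLIntegral_univ]
  have hρmass : (μρ Set.univ).toReal = Λ := by rw [hρuniv, hΛ]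
  have hd1univ : μd1 Set.univ = 1 - ∫⁻ x, min (π1 x) (π2 x) ∂ν := by
    rw [hμd1, withDensity_apply _ MeasurableSet.univ, setLIntegral_univ,
      lintegral_sub hmm hLt (Filter.Eventually.of_forall hm1), h1]
  have hd2univ : μd2 Set.univ = 1 - ∫⁻ x, min (π1 x) (π2 x) ∂ν := by
    rw [hμd2, withDensity_apply _ MeasurableSet.univ, setLIntegral_univ,
      lintegral_sub hmm hLt (Filter.Eventually.of_forall hm2), h2]
  have hd1mass : (μd1 Set.univ).toReal = 1 - Λ := by
    rw [hd1univ, ENNReal.toReal_sub_of_le hL1 one_ne_top, hΛ]; simp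
  have hd2mass : (μd2 Set.univ).toReal = 1 - Λ := by
    rw [hd2univ, ENNReal.toReal_sub_of_le hL1 one_ne_top, hΛ]; simp
  haveI : IsFiniteMeasure μρ := ⟨by rw [hρuniv]; exact lt_of_le_of_lt hL1 one_lt_top⟩
  haveI : IsFiniteMeasure μd1 :=
    ⟨by rw [hd1univ]; exact lt_of_le_of_lt tsub_le_self one_lt_top⟩
  haveI : IsFiniteMeasure μd2 :=
    ⟨by rw [hd2univ]; exact lt_of_le_of_lt tsub_le_self one_lt_top⟩
  -- integrability
  have hfρ : MemLp f 2 μρ := hf1.mono_measure (hdec1 ▸ Measure.le_add_right le_rfl)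
  have hfd1 : MemLp f 2 μd1 := hf1.mono_measure (hdec1 ▸ Measure.le_add_left le_rfl)
  have hfd2 : MemLp f 2 μd2 := hf2.mono_measure (hdec2 ▸ Measure.le_add_left le_rfl)
  have if1 : Integrable f μ1 := hf1.integrable one_le_two
  have if2 : Integrable f μ2 := hf2.integrable one_le_two
  have ifρ : Integrable f μρ := hfρ.integrable one_le_two
  have ifd1 : Integrable f μd1 := hfd1.integrable one_le_two
  have ifd2 : Integrable f μd2 := hfd2.integrable one_le_two
  have isq1 : Integrable (fun x => f x ^ 2) μ1 := hf1.integrable_sq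
  have isq2 : Integrable (fun x => f x ^ 2) μ2 := hf2.integrable_sq
  have isqρ : Integrable (fun x => f x ^ 2) μρ := hfρ.integrable_sq
  have isqd1 : Integrable (fun x => f x ^ 2) μd1 := hfd1.integrable_sq
  have isqd2 : Integrable (fun x => f x ^ 2) μd2 := hfd2.integrable_sq
  set E1 : ℝ := ∫ x, f x ∂μ1 with hE1
  set E2 : ℝ := ∫ x, f x ∂μ2 with hE2
  set S1 : ℝ := ∫ x, f x ^ 2 ∂μ1 with hS1
  set S2 : ℝ := ∫ x, f x ^ 2 ∂μ2 with hS2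
  -- Step A : LHS = S1 + S2 - 2 E1 E2
  have hinner : ∀ x, ∫ y, (f x - f y) ^ 2 ∂μ2 = (f x - E2) ^ 2 + (S2 - E2 ^ 2) := by
    intro x
    have hflip : ∫ y, (f x - f y) ^ 2 ∂μ2 = ∫ y, (f y - f x) ^ 2 ∂μ2 :=
      integral_congr_ae (Filter.Eventually.of_forall fun y => by ring)
    obtain ⟨-, -, hv⟩ := center_int_aux μ2 f (f x) if2 isq2
    rw [hflip, hv, measure_univ]
    simp [← hE2, ← hS2]
    ring
  have hLHS : ∫ x, ∫ y, (f x - f y) ^ 2 ∂μ2 ∂μ1 = S1 + S2 - 2 * E1 * E2 := by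
    have hstep : ∫ x, ∫ y, (f x - f y) ^ 2 ∂μ2 ∂μ1
        = ∫ x, ((f x - E2) ^ 2 + (S2 - E2 ^ 2)) ∂μ1 :=
      integral_congr_ae (Filter.Eventually.of_forall fun x => hinner x)
    obtain ⟨hi2, -, hv⟩ := center_int_aux μ1 f E2 if1 isq1
    rw [hstep, integral_add hi2 (integrable_const _), hv, integral_const, measure_univ]
    simp [← hE1, ← hS1]
    ring
  -- Step B : centered means over defect measures
  set c : ℝ := (∫ x, f x ∂μρ) / Λ with hc
  have hgρ : ∫ x, (f x - c) ∂μρ = 0 := by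
    obtain ⟨-, hm, -⟩ := center_int_aux μρ f c ifρ isqρ
    rw [hm, hρmass, hc]
    field_simp
    ring
  obtain ⟨igsqd1, hmd1, hvd1⟩ := center_int_aux μd1 f c ifd1 isqd1
  obtain ⟨igsqd2, hmd2, hvd2⟩ := center_int_aux μd2 f c ifd2 isqd2
  obtain ⟨igsq1, hm1', hv1⟩ := center_int_aux μ1 f c if1 isq1
  obtain ⟨igsq2, hm2', hv2⟩ := center_int_aux μ2 f c if2 isq2
  set I1 : ℝ := ∫ x, (f x - c) ∂μd1 with hI1
  set I2 : ℝ := ∫ x, (f x - c) ∂μd2 with hI2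
  have hmean1 : E1 - c = I1 := by
    have hadd : ∫ x, (f x - c) ∂μ1 = (∫ x, (f x - c) ∂μρ) + ∫ x, (f x - c) ∂μd1 := by
      rw [hdec1]
      exact integral_add_measure (ifρ.sub (integrable_const _)) (ifd1.sub (integrable_const _))
    rw [hm1', measure_univ, hgρ, zero_add] at hadd
    simp only [ENNReal.toReal_one, one_mul] at hadd
    rw [hE1, hI1, hadd]
  have hmean2 : E2 - c = I2 := by
    have hadd : ∫ x, (f x - c) ∂μ2 = (∫ x, (f x - c) ∂μρ) + ∫ x, (f x - c) ∂μd2 := by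
      rw [hdec2]
      exact integral_add_measure (ifρ.sub (integrable_const _)) (ifd2.sub (integrable_const _))
    rw [hm2', measure_univ, hgρ, zero_add] at hadd
    simp only [ENNReal.toReal_one, one_mul] at hadd
    rw [hE2, hI2, hadd]
  -- second moment decomposition
  obtain ⟨igsqρ, -, -⟩ := center_int_aux μρ f c ifρ isqρ
  have hρsqnn : 0 ≤ ∫ x, (f x - c) ^ 2 ∂μρ := integral_nonneg fun x => sq_nonneg _
  have hsqdec1 : ∫ x, (f x - c) ^ 2 ∂μ1
      = (∫ x, (f x - c) ^ 2 ∂μρ) + ∫ x, (f x - c) ^ 2 ∂μd1 := by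
    rw [hdec1]; exact integral_add_measure igsqρ igsqd1
  have hsqdec2 : ∫ x, (f x - c) ^ 2 ∂μ2
      = (∫ x, (f x - c) ^ 2 ∂μρ) + ∫ x, (f x - c) ^ 2 ∂μd2 := by
    rw [hdec2]; exact integral_add_measure igsqρ igsqd2
  -- Jensen on the defect measures
  have hJ1 : I1 ^ 2 ≤ (1 - Λ) * ∫ x, (f x - c) ^ 2 ∂μd1 := by
    have := sq_integral_le_aux μd1 (fun x => f x - c) (ifd1.sub (integrable_const _)) igsqd1
    rwa [hd1mass, ← hI1] at this
  have hJ2 : I2 ^ 2 ≤ (1 - Λ) * ∫ x, (f x - c) ^ 2 ∂μd2 := by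
    have := sq_integral_le_aux μd2 (fun x => f x - c) (ifd2.sub (integrable_const _)) igsqd2
    rwa [hd2mass, ← hI2] at this
  -- variance nonneg
  have hV1nn : 0 ≤ S1 - E1 ^ 2 := by
    have := sq_integral_le_aux μ1 f if1 isq1
    rw [measure_univ] at this
    simp only [← hE1, ← hS1, ENNReal.toReal_one, one_mul] at this
    linarith
  have hV2nn : 0 ≤ S2 - E2 ^ 2 := by
    have := sq_integral_le_aux μ2 f if2 isq2
    rw [measure_univ] at this
    simp only [← hE2, ← hS2, ENNReal.toReal_one, one_mul] at this
    linarith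
  clear_value μρ μd1 μd2 E1 E2 S1 S2 c I1 I2
  -- key bounds : Λ Iᵢ² ≤ (1 − Λ) Vᵢ
  have hk1 : Λ * I1 ^ 2 ≤ (1 - Λ) * (S1 - E1 ^ 2) := by
    have hle : ∫ x, (f x - c) ^ 2 ∂μd1 ≤ (S1 - E1 ^ 2) + I1 ^ 2 := by
      have h2' : ∫ x, (f x - c) ^ 2 ∂μ1 = (S1 - E1 ^ 2) + I1 ^ 2 := by
        rw [hv1, measure_univ, ← hmean1]
        simp [← hE1, ← hS1]
        ring
      rw [← h2', hsqdec1]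
      linarith
    have h1Λ : (0:ℝ) ≤ 1 - Λ := by linarith
    have hmul := mul_le_mul_of_nonneg_left hle h1Λ
    have := hJ1.trans hmul
    linarith only [this]
  have hk2 : Λ * I2 ^ 2 ≤ (1 - Λ) * (S2 - E2 ^ 2) := by
    have hle : ∫ x, (f x - c) ^ 2 ∂μd2 ≤ (S2 - E2 ^ 2) + I2 ^ 2 := by
      have h2' : ∫ x, (f x - c) ^ 2 ∂μ2 = (S2 - E2 ^ 2) + I2 ^ 2 := by
        rw [hv2, measure_univ, ← hmean2]
        simp [← hE2, ← hS2]
        ring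
      rw [← h2', hsqdec2]
      linarith
    have h1Λ : (0:ℝ) ≤ 1 - Λ := by linarith
    have hmul := mul_le_mul_of_nonneg_left hle h1Λ
    have := hJ2.trans hmul
    linarith only [this]
  -- conclusion
  have hdiff : E1 - E2 = I1 - I2 := by rw [← hmean1, ← hmean2]; ring
  rw [hLHS, div_mul_eq_mul_div, le_div_iff₀ hΛpos]
  have hexp : (S1 + S2 - 2 * E1 * E2) = (S1 - E1 ^ 2) + (S2 - E2 ^ 2) + (I1 - I2) ^ 2 := by
    rw [← hdiff]; ring
  rw [hexp]
  have hdsq : (I1 - I2) ^ 2 ≤ 2 * I1 ^ 2 + 2 * I2 ^ 2 := by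
    linarith only [sq_nonneg (I1 + I2)]
  have hΛd : Λ * (I1 - I2) ^ 2 ≤ Λ * (2 * I1 ^ 2 + 2 * I2 ^ 2) :=
    mul_le_mul_of_nonneg_left hdsq hΛpos.le
  linarith only [hΛd, hk1, hk2, hV1nn, hV2nn, hΛ1, hΛpos]
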